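/- In the monoid of transformations of [0,1) generated by A(x) = x/(x+1), B(x) = 1/(2-x), C(x) = 2x/(x+1), and c(x) = x/(2-x), every element can be written in the form ω₁ω₂ω₃ where ω₁ is a word in {A,B}, ω₂ is a word in blocks of the form CⁿA and cᵐB (n,m ≥ 1), and ω₃ is a word in {C,c}. -/

import Mathlib

noncomputable def fA : Function.End ℝ := fun x => x / (x + 1)
noncomputable def fB : Function.End ℝ := fun x => 1 / (2 - x)
noncomputable def fC : Function.End ℝ := fun x => 2 * x / (x + 1)
noncomputable def fc : Function.End ℝ := fun x => x / (2 - x)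

/-- Evaluation of a word in {A,B} (false = A, true = B) as a composition. -/
noncomputable def evalAB (w : List Bool) : ℝ → ℝ :=
  w.foldr (fun b g => (if b then fB else fA) ∘ g) id

/-- A block (n, false) is CⁿA and a block (m, true) is cᵐB, with n, m ≥ 1. -/
noncomputable def evalBlock (p : ℕ+ × Bool) : ℝ → ℝ :=
  if p.2 then fc^[(p.1 : ℕ)] ∘ fB else fC^[(p.1 : ℕ)] ∘ fA

noncomputable def evalBlocks (w : List (ℕ+ × Bool)) : ℝ → ℝ :=
  w.foldr (fun p g => evalBlock p ∘ g) id

/-- Evaluation of a word in {C,c} (false = C, true = c). -/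
noncomputable def evalCc (w : List Bool) : ℝ → ℝ :=
  w.foldr (fun b g => (if b then fc else fC) ∘ g) id

open Set

/-! ### Auxiliary lemmas -/

lemma evalAB_nil : evalAB [] = id := rfl
lemma evalAB_cons (b : Bool) (w : List Bool) :
    evalAB (b::w) = (if b then fB else fA) ∘ evalAB w := rfl
lemma evalCc_nil : evalCc [] = id := rfl
lemma evalCc_cons (b : Bool) (w : List Bool) :
    evalCc (b::w) = (if b then fc else fC) ∘ evalCc w := rfl
lemma evalBlocks_nil : evalBlocks [] = id := rfl
lemma evalBlocks_cons (p : ℕ+ × Bool) (w : List (ℕ+ × Bool)) :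
    evalBlocks (p::w) = evalBlock p ∘ evalBlocks w := rfl

lemma mem_fA {x : ℝ} (hx : x ∈ Ico (0:ℝ) 1) : fA x ∈ Ico (0:ℝ) 1 := by
  obtain ⟨h0, h1⟩ := hx
  refine ⟨div_nonneg h0 (by linarith), ?_⟩
  show x / (x+1) < 1
  rw [div_lt_one (by linarith)]; linarith

lemma mem_fB {x : ℝ} (hx : x ∈ Ico (0:ℝ) 1) : fB x ∈ Ico (0:ℝ) 1 := by
  obtain ⟨h0, h1⟩ := hx
  refine ⟨div_nonneg (by norm_num) (by linarith), ?_⟩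
  show 1 / (2-x) < 1
  rw [div_lt_one (by linarith)]; linarith

lemma mem_fC {x : ℝ} (hx : x ∈ Ico (0:ℝ) 1) : fC x ∈ Ico (0:ℝ) 1 := by
  obtain ⟨h0, h1⟩ := hx
  refine ⟨div_nonneg (by linarith) (by linarith), ?_⟩
  show 2*x / (x+1) < 1
  rw [div_lt_one (by linarith)]; linarith

lemma mem_fc {x : ℝ} (hx : x ∈ Ico (0:ℝ) 1) : fc x ∈ Ico (0:ℝ) 1 := by
  obtain ⟨h0, h1⟩ := hx
  refine ⟨div_nonneg h0 (by linarith), ?_⟩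
  show x / (2-x) < 1
  rw [div_lt_one (by linarith)]; linarith

lemma mem_iter_fC (n : ℕ) {x : ℝ} (hx : x ∈ Ico (0:ℝ) 1) : fC^[n] x ∈ Ico (0:ℝ) 1 := by
  induction n with
  | zero => exact hx
  | succ n ih => rw [Function.iterate_succ_apply' (f := (fC : ℝ → ℝ))]; exact mem_fC ih

lemma mem_iter_fc (n : ℕ) {x : ℝ} (hx : x ∈ Ico (0:ℝ) 1) : fc^[n] x ∈ Ico (0:ℝ) 1 := by
  induction n with
  | zero => exact hx
  | succ n ih => rw [Function.iterate_succ_apply' (f := (fc : ℝ → ℝ))]; exact mem_fc ih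

lemma mem_evalCc (w : List Bool) {x : ℝ} (hx : x ∈ Ico (0:ℝ) 1) :
    evalCc w x ∈ Ico (0:ℝ) 1 := by
  induction w with
  | nil => exact hx
  | cons b t ih =>
    rw [evalCc_cons]
    cases b
    · exact mem_fC ih
    · exact mem_fc ih

lemma mem_evalBlock (p : ℕ+ × Bool) {x : ℝ} (hx : x ∈ Ico (0:ℝ) 1) :
    evalBlock p x ∈ Ico (0:ℝ) 1 := by
  obtain ⟨n, flag⟩ := p
  cases flag
  · exact mem_iter_fC _ (mem_fA hx)
  · exact mem_iter_fc _ (mem_fB hx)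

lemma mem_evalBlocks (w : List (ℕ+ × Bool)) {x : ℝ} (hx : x ∈ Ico (0:ℝ) 1) :
    evalBlocks w x ∈ Ico (0:ℝ) 1 := by
  induction w with
  | nil => exact hx
  | cons p t ih => rw [evalBlocks_cons]; exact mem_evalBlock p ih

lemma mem_evalAB (w : List Bool) {x : ℝ} (hx : x ∈ Ico (0:ℝ) 1) :
    evalAB w x ∈ Ico (0:ℝ) 1 := by
  induction w with
  | nil => exact hx
  | cons b t ih =>
    rw [evalAB_cons]
    cases b
    · exact mem_fA ih
    · exact mem_fB ih

/-! ### Fraction computation lemmas -/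

lemma gA (a b c : ℝ) (hb : b ≠ 0) (hc : c ≠ 0) (h : a + b = c) : fA (a/b) = a/c := by
  subst h; simp only [fA]; field_simp
lemma gB (a b c : ℝ) (hb : b ≠ 0) (hc : c ≠ 0) (h : 2*b - a = c) : fB (a/b) = b/c := by
  subst h; simp only [fB]; field_simp
lemma gC (a b c : ℝ) (hb : b ≠ 0) (hc : c ≠ 0) (h : a + b = c) : fC (a/b) = 2*a/c := by
  subst h; simp only [fC]; field_simp
lemma gc (a b c : ℝ) (hb : b ≠ 0) (hc : c ≠ 0) (h : 2*b - a = c) : fc (a/b) = a/c := by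
  subst h; simp only [fc]; field_simp

/-! ### The rewriting identities, valid on [0,1) -/

lemma idCc {x : ℝ} (hx : x ∈ Ico (0:ℝ) 1) : fC (fc x) = x := by
  obtain ⟨h0, h1⟩ := hx
  rw [show fc x = x/(2-x) from rfl,
    gC x (2-x) 2 (by linarith) (by norm_num) (by ring)]
  ring

lemma idcC {x : ℝ} (hx : x ∈ Ico (0:ℝ) 1) : fc (fC x) = x := by
  obtain ⟨h0, h1⟩ := hx
  rw [show fC x = 2*x/(x+1) from rfl,
    gc (2*x) (x+1) 2 (by linarith) (by norm_num) (by ring)]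
  ring

lemma idCAA {x : ℝ} (hx : x ∈ Ico (0:ℝ) 1) : fC (fA (fA x)) = fA (fC x) := by
  obtain ⟨h0, h1⟩ := hx
  rw [show fA x = x/(x+1) from rfl,
    gA x (x+1) (2*x+1) (by linarith) (by linarith) (by ring),
    gC x (2*x+1) (3*x+1) (by linarith) (by linarith) (by ring),
    show fC x = 2*x/(x+1) from rfl,
    gA (2*x) (x+1) (3*x+1) (by linarith) (by linarith) (by ring)]

lemma idCAB {x : ℝ} (hx : x ∈ Ico (0:ℝ) 1) : fC (fA (fB x)) = fB (fA (fc x)) := by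
  obtain ⟨h0, h1⟩ := hx
  rw [show fB x = 1/(2-x) from rfl,
    gA 1 (2-x) (3-x) (by linarith) (by linarith) (by ring),
    gC 1 (3-x) (4-x) (by linarith) (by linarith) (by ring),
    show fc x = x/(2-x) from rfl,
    gA x (2-x) 2 (by linarith) (by norm_num) (by ring),
    gB x 2 (4-x) (by norm_num) (by linarith) (by ring)]
  norm_num

lemma idCB {x : ℝ} (hx : x ∈ Ico (0:ℝ) 1) : fC (fB x) = fB (fB (fC x)) := by
  obtain ⟨h0, h1⟩ := hx
  rw [show fB x = 1/(2-x) from rfl,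
    gC 1 (2-x) (3-x) (by linarith) (by linarith) (by ring),
    show fC x = 2*x/(x+1) from rfl,
    gB (2*x) (x+1) 2 (by linarith) (by norm_num) (by ring),
    gB (x+1) 2 (3-x) (by norm_num) (by linarith) (by ring)]
  norm_num

lemma idcA {x : ℝ} (hx : x ∈ Ico (0:ℝ) 1) : fc (fA x) = fA (fA (fc x)) := by
  obtain ⟨h0, h1⟩ := hx
  rw [show fA x = x/(x+1) from rfl,
    gc x (x+1) (x+2) (by linarith) (by linarith) (by ring),
    show fc x = x/(2-x) from rfl,
    gA x (2-x) 2 (by linarith) (by norm_num) (by ring),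
    gA x 2 (x+2) (by norm_num) (by linarith) (by ring)]

lemma idcBB {x : ℝ} (hx : x ∈ Ico (0:ℝ) 1) : fc (fB (fB x)) = fB (fc x) := by
  obtain ⟨h0, h1⟩ := hx
  rw [show fB x = 1/(2-x) from rfl,
    gB 1 (2-x) (3-2*x) (by linarith) (by linarith) (by ring),
    gc (2-x) (3-2*x) (4-3*x) (by linarith) (by linarith) (by ring),
    show fc x = x/(2-x) from rfl,
    gB x (2-x) (4-3*x) (by linarith) (by linarith) (by ring)]

lemma idcBA {x : ℝ} (hx : x ∈ Ico (0:ℝ) 1) : fc (fB (fA x)) = fA (fB (fC x)) := by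
  obtain ⟨h0, h1⟩ := hx
  rw [show fA x = x/(x+1) from rfl,
    gB x (x+1) (x+2) (by linarith) (by linarith) (by ring),
    gc (x+1) (x+2) (x+3) (by linarith) (by linarith) (by ring),
    show fC x = 2*x/(x+1) from rfl,
    gB (2*x) (x+1) 2 (by linarith) (by norm_num) (by ring),
    gA (x+1) 2 (x+3) (by norm_num) (by linarith) (by ring)]

/-! ### Prepending C or c to a normal form -/

/-- Prepending C (s = false) or c (s = true) to a normal form with empty AB-part. -/
lemma prep_nil (s : Bool) (w₂ : List (ℕ+ × Bool)) (w₃ : List Bool) :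
    ∃ a b c, ∀ x ∈ Ico (0:ℝ) 1,
      (if s then fc else fC) (evalBlocks w₂ (evalCc w₃ x)) =
        evalAB a (evalBlocks b (evalCc c x)) := by
  match w₂ with
  | [] =>
    exact ⟨[], [], s::w₃, fun x hx => by cases s <;> rfl⟩
  | ⟨n, flag⟩ :: t =>
    have hz : ∀ x ∈ Ico (0:ℝ) 1, evalBlocks t (evalCc w₃ x) ∈ Ico (0:ℝ) 1 :=
      fun x hx => mem_evalBlocks t (mem_evalCc w₃ hx)
    match s, flag with
    | false, false =>
      refine ⟨[], (n+1, false)::t, w₃, fun x hx => ?_⟩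
      show fC (evalBlock (n, false) (evalBlocks t (evalCc w₃ x))) =
        evalBlock (n+1, false) (evalBlocks t (evalCc w₃ x))
      simp only [evalBlock, if_neg, Bool.false_eq_true, if_false, Function.comp_apply,
        PNat.add_coe, PNat.one_coe]
      exact (congrFun (congrArg (· ∘ fA) (Function.iterate_succ' (f := (fC : ℝ → ℝ)) (n:ℕ))) _).symm
    | true, true =>
      refine ⟨[], (n+1, true)::t, w₃, fun x hx => ?_⟩
      show fc (evalBlock (n, true) (evalBlocks t (evalCc w₃ x))) =
        evalBlock (n+1, true) (evalBlocks t (evalCc w₃ x))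
      simp only [evalBlock, if_pos, Function.comp_apply, PNat.add_coe, PNat.one_coe]
      exact (congrFun (congrArg (· ∘ fB) (Function.iterate_succ' (f := (fc : ℝ → ℝ)) (n:ℕ))) _).symm
    | false, true =>
      obtain ⟨k, hk⟩ : ∃ k, (n:ℕ) = k+1 := ⟨(n:ℕ)-1, (Nat.succ_pred_eq_of_pos n.pos).symm⟩
      match k, hk with
      | 0, hk =>
        refine ⟨[true], t, w₃, fun x hx => ?_⟩
        show fC (evalBlock (n, true) (evalBlocks t (evalCc w₃ x))) =
          fB (evalBlocks t (evalCc w₃ x))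
        simp only [evalBlock, if_pos, Function.comp_apply, hk]
        rw [Function.iterate_one (f := (fc : ℝ → ℝ))]
        exact idCc (mem_fB (hz x hx))
      | j+1, hk =>
        refine ⟨[], (⟨j+1, j.succ_pos⟩, true)::t, w₃, fun x hx => ?_⟩
        show fC (evalBlock (n, true) (evalBlocks t (evalCc w₃ x))) =
          evalBlock (⟨j+1, j.succ_pos⟩, true) (evalBlocks t (evalCc w₃ x))
        simp only [evalBlock, if_pos, Function.comp_apply, hk, PNat.mk_ofNat]
        rw [Function.iterate_succ' (f := (fc : ℝ → ℝ))]
        exact idCc (mem_iter_fc _ (mem_fB (hz x hx)))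
    | true, false =>
      obtain ⟨k, hk⟩ : ∃ k, (n:ℕ) = k+1 := ⟨(n:ℕ)-1, (Nat.succ_pred_eq_of_pos n.pos).symm⟩
      match k, hk with
      | 0, hk =>
        refine ⟨[false], t, w₃, fun x hx => ?_⟩
        show fc (evalBlock (n, false) (evalBlocks t (evalCc w₃ x))) =
          fA (evalBlocks t (evalCc w₃ x))
        simp only [evalBlock, if_neg, Bool.false_eq_true, if_false, Function.comp_apply, hk]
        rw [Function.iterate_one (f := (fC : ℝ → ℝ))]
        exact idcC (mem_fA (hz x hx))
      | j+1, hk =>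
        refine ⟨[], (⟨j+1, j.succ_pos⟩, false)::t, w₃, fun x hx => ?_⟩
        show fc (evalBlock (n, false) (evalBlocks t (evalCc w₃ x))) =
          evalBlock (⟨j+1, j.succ_pos⟩, false) (evalBlocks t (evalCc w₃ x))
        simp only [evalBlock, if_neg, Bool.false_eq_true, if_false, Function.comp_apply, hk]
        rw [Function.iterate_succ' (f := (fC : ℝ → ℝ))]
        exact idcC (mem_iter_fC _ (mem_fA (hz x hx)))

/-- Prepending C (s = false) or c (s = true) to a normal form. -/
lemma prep : ∀ (n : ℕ) (w₁ : List Bool), w₁.length ≤ n →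
    ∀ (s : Bool) (w₂ : List (ℕ+ × Bool)) (w₃ : List Bool),
    ∃ a b c, ∀ x ∈ Ico (0:ℝ) 1,
      (if s then fc else fC) (evalAB w₁ (evalBlocks w₂ (evalCc w₃ x))) =
        evalAB a (evalBlocks b (evalCc c x)) := by
  intro n
  induction n with
  | zero =>
    intro w₁ hw s w₂ w₃
    have h1 : w₁ = [] := List.length_eq_zero_iff.mp (Nat.le_zero.mp hw)
    subst h1
    exact prep_nil s w₂ w₃
  | succ n ih =>
    intro w₁ hw s w₂ w₃
    have hy : ∀ (t : List Bool) (x : ℝ), x ∈ Ico (0:ℝ) 1 →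
        evalAB t (evalBlocks w₂ (evalCc w₃ x)) ∈ Ico (0:ℝ) 1 :=
      fun t x hx => mem_evalAB t (mem_evalBlocks w₂ (mem_evalCc w₃ hx))
    match w₁, s with
    | [], s => exact prep_nil s w₂ w₃
    | false::l, false =>
      match l with
      | [] =>
        refine ⟨[], (1, false)::w₂, w₃, fun x hx => ?_⟩
        show fC (fA (evalBlocks w₂ (evalCc w₃ x))) =
          evalBlock (1, false) (evalBlocks w₂ (evalCc w₃ x))
        simp only [evalBlock, if_neg, Bool.false_eq_true, if_false, Function.comp_apply,
          PNat.one_coe, Function.iterate_one]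
        rfl
      | false::t =>
        obtain ⟨a, b, c, h⟩ := ih t (by simp at hw ⊢; omega) false w₂ w₃
        refine ⟨false::a, b, c, fun x hx => ?_⟩
        have h' := h x hx
        calc fC (evalAB (false::false::t) (evalBlocks w₂ (evalCc w₃ x)))
            = fC (fA (fA (evalAB t (evalBlocks w₂ (evalCc w₃ x))))) := rfl
          _ = fA (fC (evalAB t (evalBlocks w₂ (evalCc w₃ x)))) := idCAA (hy t x hx)
          _ = fA (evalAB a (evalBlocks b (evalCc c x))) := by rw [show fC (evalAB t (evalBlocks w₂ (evalCc w₃ x))) = evalAB a (evalBlocks b (evalCc c x)) from h']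
          _ = evalAB (false::a) (evalBlocks b (evalCc c x)) := rfl
      | true::t =>
        obtain ⟨a, b, c, h⟩ := ih t (by simp at hw ⊢; omega) true w₂ w₃
        refine ⟨true::false::a, b, c, fun x hx => ?_⟩
        have h' := h x hx
        calc fC (evalAB (false::true::t) (evalBlocks w₂ (evalCc w₃ x)))
            = fC (fA (fB (evalAB t (evalBlocks w₂ (evalCc w₃ x))))) := rfl
          _ = fB (fA (fc (evalAB t (evalBlocks w₂ (evalCc w₃ x))))) := idCAB (hy t x hx)
          _ = fB (fA (evalAB a (evalBlocks b (evalCc c x)))) := by rw [show fc (evalAB t (evalBlocks w₂ (evalCc w₃ x))) = evalAB a (evalBlocks b (evalCc c x)) from h']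
          _ = evalAB (true::false::a) (evalBlocks b (evalCc c x)) := rfl
    | true::l, false =>
      obtain ⟨a, b, c, h⟩ := ih l (by simp at hw ⊢; omega) false w₂ w₃
      refine ⟨true::true::a, b, c, fun x hx => ?_⟩
      have h' := h x hx
      calc fC (evalAB (true::l) (evalBlocks w₂ (evalCc w₃ x)))
          = fC (fB (evalAB l (evalBlocks w₂ (evalCc w₃ x)))) := rfl
        _ = fB (fB (fC (evalAB l (evalBlocks w₂ (evalCc w₃ x))))) := idCB (hy l x hx)
        _ = fB (fB (evalAB a (evalBlocks b (evalCc c x)))) := by rw [show fC (evalAB l (evalBlocks w₂ (evalCc w₃ x))) = evalAB a (evalBlocks b (evalCc c x)) from h']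
        _ = evalAB (true::true::a) (evalBlocks b (evalCc c x)) := rfl
    | false::l, true =>
      obtain ⟨a, b, c, h⟩ := ih l (by simp at hw ⊢; omega) true w₂ w₃
      refine ⟨false::false::a, b, c, fun x hx => ?_⟩
      have h' := h x hx
      calc fc (evalAB (false::l) (evalBlocks w₂ (evalCc w₃ x)))
          = fc (fA (evalAB l (evalBlocks w₂ (evalCc w₃ x)))) := rfl
        _ = fA (fA (fc (evalAB l (evalBlocks w₂ (evalCc w₃ x))))) := idcA (hy l x hx)
        _ = fA (fA (evalAB a (evalBlocks b (evalCc c x)))) := by rw [show fc (evalAB l (evalBlocks w₂ (evalCc w₃ x))) = evalAB a (evalBlocks b (evalCc c x)) from h']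
        _ = evalAB (false::false::a) (evalBlocks b (evalCc c x)) := rfl
    | true::l, true =>
      match l with
      | [] =>
        refine ⟨[], (1, true)::w₂, w₃, fun x hx => ?_⟩
        show fc (fB (evalBlocks w₂ (evalCc w₃ x))) =
          evalBlock (1, true) (evalBlocks w₂ (evalCc w₃ x))
        simp only [evalBlock, if_pos, Function.comp_apply, PNat.one_coe, Function.iterate_one]
        rfl
      | true::t =>
        obtain ⟨a, b, c, h⟩ := ih t (by simp at hw ⊢; omega) true w₂ w₃
        refine ⟨true::a, b, c, fun x hx => ?_⟩
        have h' := h x hx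
        calc fc (evalAB (true::true::t) (evalBlocks w₂ (evalCc w₃ x)))
            = fc (fB (fB (evalAB t (evalBlocks w₂ (evalCc w₃ x))))) := rfl
          _ = fB (fc (evalAB t (evalBlocks w₂ (evalCc w₃ x)))) := idcBB (hy t x hx)
          _ = fB (evalAB a (evalBlocks b (evalCc c x))) := by rw [show fc (evalAB t (evalBlocks w₂ (evalCc w₃ x))) = evalAB a (evalBlocks b (evalCc c x)) from h']
          _ = evalAB (true::a) (evalBlocks b (evalCc c x)) := rfl
      | false::t =>
        obtain ⟨a, b, c, h⟩ := ih t (by simp at hw ⊢; omega) false w₂ w₃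
        refine ⟨false::true::a, b, c, fun x hx => ?_⟩
        have h' := h x hx
        calc fc (evalAB (true::false::t) (evalBlocks w₂ (evalCc w₃ x)))
            = fc (fB (fA (evalAB t (evalBlocks w₂ (evalCc w₃ x))))) := rfl
          _ = fA (fB (fC (evalAB t (evalBlocks w₂ (evalCc w₃ x))))) := idcBA (hy t x hx)
          _ = fA (fB (evalAB a (evalBlocks b (evalCc c x)))) := by rw [show fC (evalAB t (evalBlocks w₂ (evalCc w₃ x))) = evalAB a (evalBlocks b (evalCc c x)) from h']
          _ = evalAB (false::true::a) (evalBlocks b (evalCc c x)) := rfl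

/-- Every element of the monoid of transformations of [0,1) generated by A, B, C, c
    can be written as ω₁ω₂ω₃ with ω₁ a word in {A,B}, ω₂ a word in blocks CⁿA, cᵐB
    (n, m ≥ 1), and ω₃ a word in {C,c}. -/
theorem stmt15 :
    ∀ f ∈ Submonoid.closure ({fA, fB, fC, fc} : Set (Function.End ℝ)),
      ∃ (w₁ : List Bool) (w₂ : List (ℕ+ × Bool)) (w₃ : List Bool),
        ∀ x ∈ Set.Ico (0 : ℝ) 1, f x = evalAB w₁ (evalBlocks w₂ (evalCc w₃ x)) := by
  have key : ∀ f ∈ Submonoid.closure ({fA, fB, fC, fc} : Set (Function.End ℝ)),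
      ∀ (w₁ : List Bool) (w₂ : List (ℕ+ × Bool)) (w₃ : List Bool),
      ∃ a b c, ∀ x ∈ Ico (0:ℝ) 1,
        f (evalAB w₁ (evalBlocks w₂ (evalCc w₃ x))) =
          evalAB a (evalBlocks b (evalCc c x)) := by
    intro f hf
    induction hf using Submonoid.closure_induction with
    | one =>
      intro w₁ w₂ w₃
      exact ⟨w₁, w₂, w₃, fun x hx => rfl⟩
    | mul g h hg hh ihg ihh =>
      intro w₁ w₂ w₃
      obtain ⟨a, b, c, h1⟩ := ihh w₁ w₂ w₃
      obtain ⟨a', b', c', h2⟩ := ihg a b c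
      refine ⟨a', b', c', fun x hx => ?_⟩
      show g (h (evalAB w₁ (evalBlocks w₂ (evalCc w₃ x)))) = _
      rw [h1 x hx]
      exact h2 x hx
    | mem g hg =>
      intro w₁ w₂ w₃
      rcases hg with h | h | h | h
      · subst h; exact ⟨false::w₁, w₂, w₃, fun x hx => rfl⟩
      · subst h; exact ⟨true::w₁, w₂, w₃, fun x hx => rfl⟩
      · subst h
        obtain ⟨a, b, c, hh⟩ := prep w₁.length w₁ le_rfl false w₂ w₃
        exact ⟨a, b, c, fun x hx => hh x hx⟩
      · subst h
        obtain ⟨a, b, c, hh⟩ := prep w₁.length w₁ le_rfl true w₂ w₃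
        exact ⟨a, b, c, fun x hx => hh x hx⟩
  intro f hf
  obtain ⟨a, b, c, h⟩ := key f hf [] [] []
  exact ⟨a, b, c, fun x hx => h x hx⟩
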